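/- Let (H,𝓕_A,𝓕_G) be a GR(1) game with 𝓕_A = {F_A¹,…,F_Aᵐ} and 𝓕_G = {F_G¹,…,F_Gⁿ}. Then for every state q ∉ ⟦φ₄ᵛ⟧ and every system strategy f¹ over H, at least one of the following fails: (i) ∅ ≠ L_q(H,f¹) ⊆ L̄_q(H,𝓕_A) ∪ L_q(H,𝓕_G); (ii) Pre(L_q(H,f¹)) = Pre(L_q(H,f¹) ∩ L_q(H,𝓕_A)). -/

import Mathlib

namespace GR1

/-- A two-player game graph `H = ⟨Q⁰, Q¹, δ⁰, δ¹, q₀⟩`.  `env` is the set `Q⁰` of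
environment states, `sys` the set `Q¹` of system states, and `delta` combines the
transition functions `δ⁰` and `δ¹`. -/
structure GameGraph (Q : Type*) where
  env : Set Q
  sys : Set Q
  delta : Q → Set Q
  disjoint_env_sys : Disjoint env sys
  union_env_sys : env ∪ sys = Set.univ
  delta_env : ∀ q ∈ env, delta q ⊆ sys
  delta_sys : ∀ q ∈ sys, delta q ⊆ env
  delta_nonempty : ∀ q, (delta q).Nonempty
  init : Q
  init_env : init ∈ env

namespace GameGraph

/-- The existential predecessor operator `Pre∃`. -/
def PreE {Q : Type*} (G : GameGraph Q) (P : Set Q) : Set Q :=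
  {q | (G.delta q ∩ P).Nonempty}

/-- The universal predecessor operator `Pre∀`. -/
def PreA {Q : Type*} (G : GameGraph Q) (P : Set Q) : Set Q :=
  {q | G.delta q ⊆ P}

/-- The player-0 (environment) controllable predecessor operator `Pre⁰`. -/
def Pre0 {Q : Type*} (G : GameGraph Q) (P : Set Q) : Set Q :=
  {q | q ∈ G.env ∧ (G.delta q ∩ P).Nonempty} ∪ {q | q ∈ G.sys ∧ G.delta q ⊆ P}

/-- The player-1 (system) controllable predecessor operator `Pre¹`. -/
def Pre1 {Q : Type*} (G : GameGraph Q) (P : Set Q) : Set Q :=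
  {q | q ∈ G.env ∧ G.delta q ⊆ P} ∪ {q | q ∈ G.sys ∧ (G.delta q ∩ P).Nonempty}

/-- The conditional predecessor `Precond(P,P') = Pre∃(P) ∩ Pre¹(P ∪ P')`. -/
def Precond {Q : Type*} (G : GameGraph Q) (P P' : Set Q) : Set Q :=
  G.PreE P ∩ G.Pre1 (P ∪ P')

/-- The dual conditional predecessor `Precondᶜ(P,P') = Pre∀(P) ∪ Pre⁰(P ∩ P')`. -/
def PrecondC {Q : Type*} (G : GameGraph Q) (P P' : Set Q) : Set Q :=
  G.PreA P ∪ G.Pre0 (P ∩ P')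

end GameGraph

/-- Knaster–Tarski least fixed point over the powerset lattice. -/
def lfpSet {Q : Type*} (F : Set Q → Set Q) : Set Q := ⋂₀ {S | F S ⊆ S}

/-- Knaster–Tarski greatest fixed point over the powerset lattice. -/
def gfpSet {Q : Type*} (F : Set Q → Set Q) : Set Q := ⋃₀ {S | S ⊆ F S}

/-- Knaster–Tarski least fixed point over the lattice of vectors of sets. -/
def lfpVec {Q : Type*} {n : ℕ} (F : (Fin n → Set Q) → (Fin n → Set Q)) : Fin n → Set Q :=
  fun a => ⋂ V ∈ {V : Fin n → Set Q | ∀ a', F V a' ⊆ V a'}, V a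

/-- Knaster–Tarski greatest fixed point over the lattice of vectors of sets. -/
def gfpVec {Q : Type*} {n : ℕ} (F : (Fin n → Set Q) → (Fin n → Set Q)) : Fin n → Set Q :=
  fun a => ⋃ V ∈ {V : Fin n → Set Q | ∀ a', V a' ⊆ F V a'}, V a

/-- Cyclic successor of a mode: `a⁺ = (a mod n) + 1` in 1-based counting. -/
def modeSucc {n : ℕ} (a : Fin n) : Fin n :=
  ⟨(a.val + 1) % n, Nat.mod_lt _ a.pos⟩

/-- `π` is an (infinite) play over `G` starting in the state `q`. -/
def IsPlayFrom {Q : Type*} (G : GameGraph Q) (q : Q) (π : ℕ → Q) : Prop :=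
  π 0 = q ∧ ∀ k, π (k + 1) ∈ G.delta (π k)

/-- `Inf(π) ∩ F ≠ ∅` : the play `π` visits the set `F` infinitely often. -/
def InfOft {Q : Type*} (π : ℕ → Q) (F : Set Q) : Prop := ∀ n, ∃ k, n ≤ k ∧ π k ∈ F

/-- `L_q(H,F)` : plays from `q` satisfying the Büchi condition `F`. -/
def LBuchi {Q : Type*} (G : GameGraph Q) (q : Q) (F : Set Q) : Set (ℕ → Q) :=
  {π | IsPlayFrom G q π ∧ InfOft π F}

/-- `L_q(H,𝓕)` : plays from `q` satisfying the generalized Büchi condition `𝓕`. -/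
def LGenBuchi {Q ι : Type*} (G : GameGraph Q) (q : Q) (F : ι → Set Q) : Set (ℕ → Q) :=
  {π | IsPlayFrom G q π ∧ ∀ i, InfOft π (F i)}

/-- `Pre(L)` : the set of all finite prefixes of the (infinite) words in `L`. -/
def prefixes {Q : Type*} (L : Set (ℕ → Q)) : Set (List Q) :=
  {w | ∃ π ∈ L, ∃ k, w = (List.range k).map π}

/-- A (history dependent) system strategy: on a history ending in a system state it
produces a `δ¹`-successor of that state. -/
def IsSysStrategy {Q : Type*} (G : GameGraph Q) (f : List Q → Q) : Prop :=
  ∀ (w : List Q) (q : Q), q ∈ G.sys → f (w ++ [q]) ∈ G.delta q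

/-- The finite history `π|_{[0,k]}` of a play. -/
def histUpTo {Q : Type*} (π : ℕ → Q) (k : ℕ) : List Q := (List.range (k + 1)).map π

/-- `L_q(H,f¹)` : plays from `q` compliant with the system strategy `f¹`. -/
def Lstrat {Q : Type*} (G : GameGraph Q) (q : Q) (f : List Q → Q) : Set (ℕ → Q) :=
  {π | IsPlayFrom G q π ∧ ∀ k, π k ∈ G.sys → π (k + 1) = f (histUpTo π k)}

/-- `L_q(H,f¹)` for a memoryless system strategy `f¹ : Q → Q`. -/
def Lmem {Q : Type*} (G : GameGraph Q) (q : Q) (f : Q → Q) : Set (ℕ → Q) :=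
  {π | IsPlayFrom G q π ∧ ∀ k, π k ∈ G.sys → π (k + 1) = f (π k)}

/-- Strict lexicographic order on ranks. -/
def rankLt (p r : ℕ × ℕ) : Prop := p.1 < r.1 ∨ (p.1 = r.1 ∧ p.2 < r.2)

/-- Lexicographic order on ranks. -/
def rankLe (p r : ℕ × ℕ) : Prop := p.1 < r.1 ∨ (p.1 = r.1 ∧ p.2 ≤ r.2)

/-! ### The 4-nested fixed point `φ₄` for singleton winning conditions -/

/-- The body `(F_G ∩ Pre¹(Z)) ∪ Pre¹(Y) ∪ ((Q∖F_A) ∩ Precond(W, X∖F_A))`. -/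
def body {Q : Type*} (G : GameGraph Q) (FA FG Z Y X W : Set Q) : Set Q :=
  (FG ∩ G.Pre1 Z) ∪ G.Pre1 Y ∪ (FAᶜ ∩ G.Precond W (X \ FA))

def innerW {Q : Type*} (G : GameGraph Q) (FA FG Z Y X : Set Q) : Set Q :=
  lfpSet (fun W => body G FA FG Z Y X W)

def innerX {Q : Type*} (G : GameGraph Q) (FA FG Z Y : Set Q) : Set Q :=
  gfpSet (fun X => innerW G FA FG Z Y X)

def innerY {Q : Type*} (G : GameGraph Q) (FA FG Z : Set Q) : Set Q :=
  lfpSet (fun Y => innerX G FA FG Z Y)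

/-- `⟦φ₄⟧ = Z^∞` : the value of `νZ.μY.νX.μW. (F_G ∩ Pre¹(Z)) ∪ Pre¹(Y) ∪
((Q∖F_A) ∩ Precond(W, X∖F_A))`. -/
def phi4 {Q : Type*} (G : GameGraph Q) (FA FG : Set Q) : Set Q :=
  gfpSet (fun Z => innerY G FA FG Z)

/-- The approximants `Yⁱ` of `Y` in the terminal iteration over `Z` (`Y⁰ = ∅`). -/
def Yapprox {Q : Type*} (G : GameGraph Q) (FA FG : Set Q) : ℕ → Set Q
  | 0 => ∅
  | i + 1 => innerX G FA FG (phi4 G FA FG) (Yapprox G FA FG i)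

/-- The approximants `Wⁱ_j` of `W` computed with `X = Xⁱ = Yⁱ` and `Y = Yⁱ⁻¹`. -/
def Wapprox {Q : Type*} (G : GameGraph Q) (FA FG : Set Q) (i : ℕ) : ℕ → Set Q
  | 0 => ∅
  | j + 1 =>
      body G FA FG (phi4 G FA FG) (Yapprox G FA FG (i - 1)) (Yapprox G FA FG i)
        (Wapprox G FA FG i j)

/-- `rank(q) = (i,j)` iff `q ∈ (Yⁱ∖Yⁱ⁻¹) ∩ (Wⁱ_j∖Wⁱ_{j−1})` with `i,j > 0`. -/
def hasRank {Q : Type*} (G : GameGraph Q) (FA FG : Set Q) (q : Q) (i j : ℕ) : Prop :=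
  0 < i ∧ 0 < j ∧
    q ∈ (Yapprox G FA FG i \ Yapprox G FA FG (i - 1)) ∩
        (Wapprox G FA FG i j \ Wapprox G FA FG i (j - 1))

/-- The memoryless system strategy extracted from the ranking: `f¹(q) ∈ δ¹(q)`,
`rank(f¹(q)) < rank(q)` whenever `rank(q) > (1,1)`, and `f¹(q) ∈ Z^∞` otherwise. -/
def GoodStrategy {Q : Type*} (G : GameGraph Q) (FA FG : Set Q) (f : Q → Q) : Prop :=
  ∀ q, q ∈ G.sys → q ∈ phi4 G FA FG →
    f q ∈ G.delta q ∧
      ∀ i j, hasRank G FA FG q i j →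
        (((i, j) = ((1 : ℕ), (1 : ℕ)) → f q ∈ phi4 G FA FG) ∧
          ((i, j) ≠ ((1 : ℕ), (1 : ℕ)) →
            ∃ i' j', hasRank G FA FG (f q) i' j' ∧ rankLt (i', j') (i, j)))

/-! ### The negated fixed point `φ̄₄` (singleton conditions) -/

/-- The simplified negated body
`Pre⁰(Z̄) ∪ ((Q∖F_G) ∩ F_A ∩ Pre⁰(Ȳ)) ∪ ((Q∖F_G) ∩ Precondᶜ(W̄, X̄ ∪ F_A))`. -/
def nbody {Q : Type*} (G : GameGraph Q) (FA FG Z Y X W : Set Q) : Set Q :=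
  G.Pre0 Z ∪ (FGᶜ ∩ FA ∩ G.Pre0 Y) ∪ (FGᶜ ∩ G.PrecondC W (X ∪ FA))

/-- The simplified negated fixed point `φ̄₄ = μZ̄.νȲ.μX̄.νW̄. nbody`. -/
def phi4neg {Q : Type*} (G : GameGraph Q) (FA FG : Set Q) : Set Q :=
  lfpSet (fun Z => gfpSet (fun Y => lfpSet (fun X => gfpSet (fun W =>
    nbody G FA FG Z Y X W))))

/-- The unsimplified negation body
`((Q∖F_G) ∪ Pre⁰(Z̄)) ∩ Pre⁰(Ȳ) ∩ (F_A ∪ Precondᶜ(W̄, X̄ ∪ F_A))`. -/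
def nbodyRaw {Q : Type*} (G : GameGraph Q) (FA FG Z Y X W : Set Q) : Set Q :=
  (FGᶜ ∪ G.Pre0 Z) ∩ G.Pre0 Y ∩ (FA ∪ G.PrecondC W (X ∪ FA))

/-- The unsimplified negated fixed point. -/
def phi4negRaw {Q : Type*} (G : GameGraph Q) (FA FG : Set Q) : Set Q :=
  lfpSet (fun Z => gfpSet (fun Y => lfpSet (fun X => gfpSet (fun W =>
    nbodyRaw G FA FG Z Y X W))))

/-- The approximants `Z̄ⁱ` of the negated fixed point (`Z̄⁰ = ∅`). -/
def Zbar {Q : Type*} (G : GameGraph Q) (FA FG : Set Q) : ℕ → Set Q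
  | 0 => ∅
  | i + 1 =>
      gfpSet (fun Y => lfpSet (fun X => gfpSet (fun W =>
        nbody G FA FG (Zbar G FA FG i) Y X W)))

/-- The approximants `X̄ⁱ_j` of `X̄` computed while computing `Z̄ⁱ` (using `Ȳ = Z̄ⁱ` and
`Z̄ = Z̄ⁱ⁻¹`), with `X̄ⁱ₀ = ∅`. -/
def Xbar {Q : Type*} (G : GameGraph Q) (FA FG : Set Q) (i : ℕ) : ℕ → Set Q
  | 0 => ∅
  | j + 1 =>
      gfpSet (fun W =>
        nbody G FA FG (Zbar G FA FG (i - 1)) (Zbar G FA FG i) (Xbar G FA FG i j) W)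

/-- The negated rank: `rank(q) = (i,j)` iff `q ∈ X̄ⁱ_j ∖ X̄ⁱ_{j−1}` with `i,j > 0`. -/
def nrank {Q : Type*} (G : GameGraph Q) (FA FG : Set Q) (q : Q) (i j : ℕ) : Prop :=
  0 < i ∧ 0 < j ∧ q ∈ Xbar G FA FG i j \ Xbar G FA FG i (j - 1)

/-- Environment moves permitted during the inductive construction of the reachable
region `R_{f¹}` (cases (a'), (b'), (c'2), (c'3) and the remaining case (c'1)). -/
def envStep {Q : Type*} (G : GameGraph Q) (FA FG : Set Q) (q' q'' : Q) : Prop :=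
  q'' ∈ G.delta q' ∧
    ∃ i j, nrank G FA FG q' i j ∧
      ((q'' ∈ (phi4 G FA FG)ᶜ ∧ ∃ i' j', nrank G FA FG q'' i' j' ∧ i' ≤ i - 1) ∨
       (q' ∈ FA \ FG ∧ q'' ∈ (phi4 G FA FG)ᶜ ∧
          ∃ i' j', nrank G FA FG q'' i' j' ∧ i' ≤ i) ∨
       (q'' ∈ (phi4 G FA FG)ᶜ ∧
          ∃ i' j', nrank G FA FG q'' i' j' ∧ rankLe (i', j') (i, j - 1)) ∨
       (q'' ∈ (phi4 G FA FG)ᶜ ∧ q'' ∈ FA ∧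
          ∃ i' j', nrank G FA FG q'' i' j' ∧ rankLe (i', j') (i, j)) ∨
       (∀ p ∈ G.delta q', p ∈ (phi4 G FA FG)ᶜ ∧
          ∃ i' j', nrank G FA FG p i' j' ∧ rankLe (i', j') (i, j)))

/-- `L_q(H,f¹,R_{f¹})` : plays from `q` compliant with `f¹` that remain within the
reachable region `R_{f¹}`, i.e. in which every environment move follows the rules of
the inductive construction of `R_{f¹}`. -/
def Lrestr {Q : Type*} (G : GameGraph Q) (FA FG : Set Q) (q : Q) (f : List Q → Q) :
    Set (ℕ → Q) :=
  {π | π ∈ Lstrat G q f ∧ ∀ k, π k ∈ G.env → envStep G FA FG (π k) (π (k + 1))}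

/-! ### The vectorized fixed point `φ₄ᵛ` for general GR(1) conditions -/

/-- The body `Ω^{ab}` of the vectorized fixed point. -/
def bodyV {Q : Type*} {n m : ℕ} (G : GameGraph Q) (FAv : Fin m → Set Q)
    (FGv : Fin n → Set Q) (Zv : Fin n → Set Q) (a : Fin n) (b : Fin m)
    (Y X W : Set Q) : Set Q :=
  (FGv a ∩ G.Pre1 (Zv (modeSucc a))) ∪ G.Pre1 Y ∪ ((FAv b)ᶜ ∩ G.Precond W (X \ FAv b))

def innerWV {Q : Type*} {n m : ℕ} (G : GameGraph Q) (FAv : Fin m → Set Q)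
    (FGv : Fin n → Set Q) (Zv : Fin n → Set Q) (a : Fin n) (b : Fin m)
    (Y X : Set Q) : Set Q :=
  lfpSet (fun W => bodyV G FAv FGv Zv a b Y X W)

def innerXV {Q : Type*} {n m : ℕ} (G : GameGraph Q) (FAv : Fin m → Set Q)
    (FGv : Fin n → Set Q) (Zv : Fin n → Set Q) (a : Fin n) (b : Fin m)
    (Y : Set Q) : Set Q :=
  gfpSet (fun X => innerWV G FAv FGv Zv a b Y X)

/-- The vector `[Z¹,…,Zⁿ]` of the vectorized fixed point `φ₄ᵛ`. -/
def phi4v {Q : Type*} {n m : ℕ} (G : GameGraph Q) (FAv : Fin m → Set Q)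
    (FGv : Fin n → Set Q) : Fin n → Set Q :=
  gfpVec (fun Zv a => lfpSet (fun Y => ⋃ b, innerXV G FAv FGv Zv a b Y))

/-- `⟦φ₄ᵛ⟧ = Z^∞ = ⋃_a Zᵃ^∞`. -/
def phi4vSem {Q : Type*} {n m : ℕ} (G : GameGraph Q) (FAv : Fin m → Set Q)
    (FGv : Fin n → Set Q) : Set Q :=
  ⋃ a, phi4v G FAv FGv a

/-- The approximants `ᵃYⁱ` (with `ᵃY⁰ = ∅`) of `Yᵃ` in the terminal iteration. -/
def YapproxV {Q : Type*} {n m : ℕ} (G : GameGraph Q) (FAv : Fin m → Set Q)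
    (FGv : Fin n → Set Q) (a : Fin n) : ℕ → Set Q
  | 0 => ∅
  | i + 1 => ⋃ b, innerXV G FAv FGv (phi4v G FAv FGv) a b (YapproxV G FAv FGv a i)

/-- The fixed point `ᵃᵇXⁱ` of `X^{ab}` computed during the `i`-th iteration. -/
def XfixV {Q : Type*} {n m : ℕ} (G : GameGraph Q) (FAv : Fin m → Set Q)
    (FGv : Fin n → Set Q) (a : Fin n) (b : Fin m) (i : ℕ) : Set Q :=
  innerXV G FAv FGv (phi4v G FAv FGv) a b (YapproxV G FAv FGv a (i - 1))

/-- The approximants `ᵃᵇWⁱ_j` of `W^{ab}` computed while computing `ᵃYⁱ`. -/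
def WapproxV {Q : Type*} {n m : ℕ} (G : GameGraph Q) (FAv : Fin m → Set Q)
    (FGv : Fin n → Set Q) (a : Fin n) (b : Fin m) (i : ℕ) : ℕ → Set Q
  | 0 => ∅
  | j + 1 =>
      bodyV G FAv FGv (phi4v G FAv FGv) a b (YapproxV G FAv FGv a (i - 1))
        (XfixV G FAv FGv a b i) (WapproxV G FAv FGv a b i j)

/-- The mode-based rank: `ᵃᵇrank(q) = (i,j)` iff
`q ∈ (ᵃYⁱ∖ᵃYⁱ⁻¹) ∩ (ᵃᵇWⁱ_j∖ᵃᵇWⁱ_{j−1})` with `i,j > 0`. -/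
def hasRankV {Q : Type*} {n m : ℕ} (G : GameGraph Q) (FAv : Fin m → Set Q)
    (FGv : Fin n → Set Q) (a : Fin n) (b : Fin m) (q : Q) (i j : ℕ) : Prop :=
  0 < i ∧ 0 < j ∧
    q ∈ (YapproxV G FAv FGv a i \ YapproxV G FAv FGv a (i - 1)) ∩
        (WapproxV G FAv FGv a b i j \ WapproxV G FAv FGv a b i (j - 1))

/-- The finite-memory system strategy extracted from the mode-based ranking. -/
def GoodStrategyV {Q : Type*} {n m : ℕ} (G : GameGraph Q) (FAv : Fin m → Set Q)
    (FGv : Fin n → Set Q) (f : Q × Fin n × Fin m → Q × Fin n × Fin m) : Prop :=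
  ∀ (q : Q) (a : Fin n) (b : Fin m), q ∈ G.sys → q ∈ phi4v G FAv FGv a →
    (f (q, a, b)).1 ∈ G.delta q ∧
      ∀ i j, hasRankV G FAv FGv a b q i j →
        (((i, j) = ((1 : ℕ), (1 : ℕ)) →
            (f (q, a, b)).1 ∈ phi4v G FAv FGv (modeSucc a) ∧
              (f (q, a, b)).2.1 = modeSucc a) ∧
          (1 < i ∧ j = 1 →
            (f (q, a, b)).2.1 = a ∧
              ∃ i' j',
                hasRankV G FAv FGv a ((f (q, a, b)).2.2) ((f (q, a, b)).1) i' j' ∧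
                  i' ≤ i - 1) ∧
          (1 < j →
            (f (q, a, b)).2.1 = a ∧ (f (q, a, b)).2.2 = b ∧
              ∃ i' j',
                hasRankV G FAv FGv a b ((f (q, a, b)).1) i' j' ∧
                  rankLe (i', j') (i, j - 1)))

/-- Compliance of a play with a finite-memory strategy via mode traces `α`, `β`. -/
def CompliantModeV {Q : Type*} {n m : ℕ} (G : GameGraph Q) (FAv : Fin m → Set Q)
    (FGv : Fin n → Set Q) (f : Q × Fin n × Fin m → Q × Fin n × Fin m)
    (π : ℕ → Q) (α : ℕ → Fin n) (β : ℕ → Fin m) : Prop :=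
  ∀ k,
    (π k ∈ G.sys → (π (k + 1), α (k + 1), β (k + 1)) = f (π k, α k, β k)) ∧
      (π k ∈ G.env →
        (hasRankV G FAv FGv (α k) (β k) (π (k + 1)) 1 1 →
            α (k + 1) = modeSucc (α k)) ∧
          ((∃ i, 1 < i ∧ hasRankV G FAv FGv (α k) (β k) (π (k + 1)) i 1) →
            α (k + 1) = α k) ∧
          ((∃ i j, 1 < j ∧ hasRankV G FAv FGv (α k) (β k) (π (k + 1)) i j) →
            α (k + 1) = α k ∧ β (k + 1) = β k))

/-- `L_q(H,f¹)` for a finite-memory strategy: plays from `q` compliant with `f¹`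
for some mode traces. -/
def LmodeV {Q : Type*} {n m : ℕ} (G : GameGraph Q) (FAv : Fin m → Set Q)
    (FGv : Fin n → Set Q) (q : Q) (f : Q × Fin n × Fin m → Q × Fin n × Fin m) :
    Set (ℕ → Q) :=
  {π | IsPlayFrom G q π ∧ ∃ α β, CompliantModeV G FAv FGv f π α β}

/-- `ᵃD = F_Gᵃ ∩ Pre¹(Z^{a⁺,∞})`. -/
def DsetV {Q : Type*} {n m : ℕ} (G : GameGraph Q) (FAv : Fin m → Set Q)
    (FGv : Fin n → Set Q) (a : Fin n) : Set Q :=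
  FGv a ∩ G.Pre1 (phi4v G FAv FGv (modeSucc a))

/-- `ᵃEⁱ = Pre¹(ᵃYⁱ⁻¹) ∖ ᵃYⁱ⁻¹`. -/
def EsetV {Q : Type*} {n m : ℕ} (G : GameGraph Q) (FAv : Fin m → Set Q)
    (FGv : Fin n → Set Q) (a : Fin n) (i : ℕ) : Set Q :=
  G.Pre1 (YapproxV G FAv FGv a (i - 1)) \ YapproxV G FAv FGv a (i - 1)

/-- `ᵃᵇΘⁱ_j = (Q∖F_Aᵇ) ∩ Precond(ᵃᵇWⁱ_{j−1}, ᵃᵇXⁱ∖F_Aᵇ)`. -/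
def ThetaV {Q : Type*} {n m : ℕ} (G : GameGraph Q) (FAv : Fin m → Set Q)
    (FGv : Fin n → Set Q) (a : Fin n) (b : Fin m) (i j : ℕ) : Set Q :=
  (FAv b)ᶜ ∩ G.Precond (WapproxV G FAv FGv a b i (j - 1)) (XfixV G FAv FGv a b i \ FAv b)

/-- `ᵃᵇRⁱ_j = ᵃᵇΘⁱ_j ∖ (ᵃᵇWⁱ_{j−1} ∪ ᵃYⁱ⁻¹ ∪ ᵃEⁱ ∪ ᵃD)`. -/
def RsetV {Q : Type*} {n m : ℕ} (G : GameGraph Q) (FAv : Fin m → Set Q)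
    (FGv : Fin n → Set Q) (a : Fin n) (b : Fin m) (i j : ℕ) : Set Q :=
  ThetaV G FAv FGv a b i j \
    (WapproxV G FAv FGv a b i (j - 1) ∪ YapproxV G FAv FGv a (i - 1) ∪
      EsetV G FAv FGv a i ∪ DsetV G FAv FGv a)

/-! ### The negated vectorized fixed point -/

/-- The body of the negated vectorized fixed point. -/
def nbodyV {Q : Type*} {n m : ℕ} (G : GameGraph Q) (FAv : Fin m → Set Q)
    (FGv : Fin n → Set Q) (Zv : Fin n → Set Q) (a : Fin n) (b : Fin m)
    (Y X W : Set Q) : Set Q :=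
  G.Pre0 (Zv (modeSucc a)) ∪ ((FGv a)ᶜ ∩ FAv b ∩ G.Pre0 Y) ∪
    ((FGv a)ᶜ ∩ G.PrecondC W (X ∪ FAv b))

/-- The coordinated approximants `Z̄ᵃⁱ` of the negated vectorized fixed point. -/
def ZbarV {Q : Type*} {n m : ℕ} (G : GameGraph Q) (FAv : Fin m → Set Q)
    (FGv : Fin n → Set Q) : ℕ → Fin n → Set Q
  | 0 => fun _ => ∅
  | i + 1 => fun a =>
      gfpSet (fun Y => ⋂ b, lfpSet (fun X => gfpSet (fun W =>
        nbodyV G FAv FGv (ZbarV G FAv FGv i) a b Y X W)))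

/-- The approximants `X̄^{ab,i}_j` of `X̄^{ab}` computed during the `i`-th iteration. -/
def XbarV {Q : Type*} {n m : ℕ} (G : GameGraph Q) (FAv : Fin m → Set Q)
    (FGv : Fin n → Set Q) (a : Fin n) (b : Fin m) (i : ℕ) : ℕ → Set Q
  | 0 => ∅
  | j + 1 =>
      gfpSet (fun W =>
        nbodyV G FAv FGv (ZbarV G FAv FGv (i - 1)) a b (ZbarV G FAv FGv i a)
          (XbarV G FAv FGv a b i j) W)

/-- The negated mode-based rank: `ᵃᵇrank(q) = (i,j)` iff `q ∈ X̄^{ab,i}_j∖X̄^{ab,i}_{j−1}`. -/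
def nrankV {Q : Type*} {n m : ℕ} (G : GameGraph Q) (FAv : Fin m → Set Q)
    (FGv : Fin n → Set Q) (a : Fin n) (b : Fin m) (q : Q) (i j : ℕ) : Prop :=
  0 < i ∧ 0 < j ∧ q ∈ XbarV G FAv FGv a b i j \ XbarV G FAv FGv a b i (j - 1)

/-- Environment moves permitted during the inductive construction of `R_{f¹}`
in the vectorized setting. -/
def envStepV {Q : Type*} {n m : ℕ} (G : GameGraph Q) (FAv : Fin m → Set Q)
    (FGv : Fin n → Set Q) (q' q'' : Q) : Prop :=
  q'' ∈ G.delta q' ∧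
    ∃ (a : Fin n) (b : Fin m) (i j : ℕ), nrankV G FAv FGv a b q' i j ∧
      ((q'' ∈ (phi4vSem G FAv FGv)ᶜ ∧
          ∃ b' i' j', nrankV G FAv FGv (modeSucc a) b' q'' i' j' ∧ i' ≤ i - 1) ∨
       (q' ∈ FAv b \ FGv a ∧ q'' ∈ (phi4vSem G FAv FGv)ᶜ ∧
          ∃ b' i' j', nrankV G FAv FGv a b' q'' i' j' ∧ i' ≤ i) ∨
       (q'' ∈ (phi4vSem G FAv FGv)ᶜ ∧
          ∃ i' j', nrankV G FAv FGv a b q'' i' j' ∧ rankLe (i', j') (i, j - 1)) ∨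
       (q'' ∈ (phi4vSem G FAv FGv)ᶜ ∧ q'' ∈ FAv b ∧
          ∃ i' j', nrankV G FAv FGv a b q'' i' j' ∧ rankLe (i', j') (i, j)) ∨
       (∀ p ∈ G.delta q', p ∈ (phi4vSem G FAv FGv)ᶜ ∧
          ∃ i' j', nrankV G FAv FGv a b p i' j' ∧ rankLe (i', j') (i, j)))

/-- `L_q(H,f¹,R_{f¹})` in the vectorized setting. -/
def LrestrV {Q : Type*} {n m : ℕ} (G : GameGraph Q) (FAv : Fin m → Set Q)
    (FGv : Fin n → Set Q) (q : Q) (f : List Q → Q) : Set (ℕ → Q) :=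
  {π | π ∈ Lstrat G q f ∧ ∀ k, π k ∈ G.env → envStepV G FAv FGv (π k) (π (k + 1))}
/-! ### Auxiliary lemmas for the completeness proof -/

section LatticeAux

variable {Q : Type*}

lemma lfpSet_le {F : Set Q → Set Q} {S : Set Q} (h : F S ⊆ S) : lfpSet F ⊆ S :=
  Set.sInter_subset_of_mem h

lemma le_gfpSet {F : Set Q → Set Q} {S : Set Q} (h : S ⊆ F S) : S ⊆ gfpSet F :=
  Set.subset_sUnion_of_mem h

lemma le_lfpSet {F : Set Q → Set Q} {S : Set Q} (h : ∀ T, F T ⊆ T → S ⊆ T) :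
    S ⊆ lfpSet F :=
  Set.subset_sInter fun T hT => h T hT

lemma lfpSet_mono {F F' : Set Q → Set Q} (h : ∀ T, F T ⊆ F' T) :
    lfpSet F ⊆ lfpSet F' :=
  le_lfpSet fun T hT => lfpSet_le ((h T).trans hT)

lemma gfpSet_mono {F F' : Set Q → Set Q} (h : ∀ T, F T ⊆ F' T) :
    gfpSet F ⊆ gfpSet F' :=
  Set.sUnion_subset fun T hT => le_gfpSet (Set.Subset.trans hT (h T))

lemma prefixed_lfpSet {F : Set Q → Set Q} (hmono : ∀ S T, S ⊆ T → F S ⊆ F T) :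
    F (lfpSet F) ⊆ lfpSet F :=
  le_lfpSet fun T hT => (hmono _ _ (lfpSet_le hT)).trans hT

lemma lfpSet_fixed {F : Set Q → Set Q} (hmono : ∀ S T, S ⊆ T → F S ⊆ F T) :
    F (lfpSet F) = lfpSet F :=
  subset_antisymm (prefixed_lfpSet hmono)
    (lfpSet_le (hmono _ _ (prefixed_lfpSet hmono)))

lemma mem_lfpSet_of_prefixed {F : Set Q → Set Q} {x : Q}
    (h : ∀ T, F T ⊆ T → x ∈ T) : x ∈ lfpSet F :=
  Set.mem_sInter.2 fun T hT => h T hT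

end LatticeAux

section PreAux

variable {Q : Type*} (G : GameGraph Q)

lemma Pre1_mono {P P' : Set Q} (h : P ⊆ P') : G.Pre1 P ⊆ G.Pre1 P' := by
  intro x hx
  rcases hx with hx | hx
  · exact Or.inl ⟨hx.1, hx.2.trans h⟩
  · exact Or.inr ⟨hx.1, hx.2.mono (Set.inter_subset_inter_right _ h)⟩

lemma PreE_mono {P P' : Set Q} (h : P ⊆ P') : G.PreE P ⊆ G.PreE P' := by
  intro x hx
  exact hx.mono (Set.inter_subset_inter_right _ h)

lemma Precond_mono {P₁ P₂ P₁' P₂' : Set Q} (h₁ : P₁ ⊆ P₁') (h₂ : P₂ ⊆ P₂') :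
    G.Precond P₁ P₂ ⊆ G.Precond P₁' P₂' :=
  Set.inter_subset_inter (PreE_mono G h₁) (Pre1_mono G (Set.union_subset_union h₁ h₂))

lemma mem_Pre1_env {P : Set Q} {x : Q} (hx : x ∈ G.env) :
    x ∈ G.Pre1 P ↔ G.delta x ⊆ P := by
  constructor
  · rintro (h | h)
    · exact h.2
    · exact absurd hx (Set.disjoint_right.1 G.disjoint_env_sys h.1)
  · intro h; exact Or.inl ⟨hx, h⟩

lemma mem_Pre1_sys {P : Set Q} {x : Q} (hx : x ∈ G.sys) :
    x ∈ G.Pre1 P ↔ (G.delta x ∩ P).Nonempty := by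
  constructor
  · rintro (h | h)
    · exact absurd hx (Set.disjoint_left.1 G.disjoint_env_sys h.1)
    · exact h.2
  · intro h; exact Or.inr ⟨hx, h⟩

lemma env_or_sys (x : Q) : x ∈ G.env ∨ x ∈ G.sys := by
  have : x ∈ G.env ∪ G.sys := by rw [G.union_env_sys]; trivial
  exact this

lemma not_sys_of_env {x : Q} (hx : x ∈ G.env) : x ∉ G.sys :=
  Set.disjoint_left.1 G.disjoint_env_sys hx

end PreAux

section BodyAux

variable {Q : Type*} {n m : ℕ} (G : GameGraph Q) (FAv : Fin m → Set Q)
  (FGv : Fin n → Set Q) (Zv : Fin n → Set Q) (a : Fin n) (b : Fin m)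

lemma bodyV_mono_W {Y X W W' : Set Q} (h : W ⊆ W') :
    bodyV G FAv FGv Zv a b Y X W ⊆ bodyV G FAv FGv Zv a b Y X W' := by
  unfold bodyV
  exact Set.union_subset_union (Set.Subset.refl _)
    (Set.inter_subset_inter_right _ (Precond_mono G h (Set.Subset.refl _)))

lemma bodyV_mono_X {Y X X' W : Set Q} (h : X ⊆ X') :
    bodyV G FAv FGv Zv a b Y X W ⊆ bodyV G FAv FGv Zv a b Y X' W := by
  unfold bodyV
  exact Set.union_subset_union (Set.Subset.refl _)
    (Set.inter_subset_inter_right _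
      (Precond_mono G (Set.Subset.refl _) (Set.diff_subset_diff_left h)))

lemma bodyV_mono_Y {Y Y' X W : Set Q} (h : Y ⊆ Y') :
    bodyV G FAv FGv Zv a b Y X W ⊆ bodyV G FAv FGv Zv a b Y' X W := by
  unfold bodyV
  exact Set.union_subset_union
    (Set.union_subset_union (Set.Subset.refl _) (Pre1_mono G h)) (Set.Subset.refl _)

lemma innerWV_mono_X {Y X X' : Set Q} (h : X ⊆ X') :
    innerWV G FAv FGv Zv a b Y X ⊆ innerWV G FAv FGv Zv a b Y X' :=
  lfpSet_mono fun _ => bodyV_mono_X G FAv FGv Zv a b h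

lemma innerWV_mono_Y {Y Y' X : Set Q} (h : Y ⊆ Y') :
    innerWV G FAv FGv Zv a b Y X ⊆ innerWV G FAv FGv Zv a b Y' X :=
  lfpSet_mono fun _ => bodyV_mono_Y G FAv FGv Zv a b h

lemma innerXV_mono_Y {Y Y' : Set Q} (h : Y ⊆ Y') :
    innerXV G FAv FGv Zv a b Y ⊆ innerXV G FAv FGv Zv a b Y' :=
  gfpSet_mono fun _ => innerWV_mono_Y G FAv FGv Zv a b h

lemma innerWV_fixed (Y X : Set Q) :
    bodyV G FAv FGv Zv a b Y X (innerWV G FAv FGv Zv a b Y X) =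
      innerWV G FAv FGv Zv a b Y X :=
  lfpSet_fixed fun _ _ h => bodyV_mono_W G FAv FGv Zv a b h

end BodyAux

section ListAux

variable {Q : Type*}

lemma histUpTo_length (π : ℕ → Q) (k : ℕ) : (histUpTo π k).length = k + 1 := by
  simp [histUpTo]

lemma histUpTo_ne_nil (π : ℕ → Q) (k : ℕ) : histUpTo π k ≠ [] := by
  intro h
  have := histUpTo_length π k
  rw [h] at this
  simp at this

lemma histUpTo_getD (π : ℕ → Q) (q : Q) {i k : ℕ} (hi : i ≤ k) :
    (histUpTo π k).getD i q = π i := by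
  rw [List.getD_eq_getElem _ _ (by simp [histUpTo]; omega)]
  simp [histUpTo]

lemma histUpTo_congr {π σ : ℕ → Q} {k : ℕ} (h : ∀ i ≤ k, π i = σ i) :
    histUpTo π k = histUpTo σ k := by
  unfold histUpTo
  refine List.map_congr_left fun i hi => ?_
  exact h i (by simpa [Nat.lt_succ_iff] using List.mem_range.1 hi)

lemma getLastD_histUpTo (π : ℕ → Q) (q : Q) (k : ℕ) :
    (histUpTo π k).getLastD q = π k := by
  unfold histUpTo
  rw [List.range_succ]
  simp

lemma head?_histUpTo (π : ℕ → Q) (k : ℕ) : (histUpTo π k).head? = some (π 0) := by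
  unfold histUpTo
  rw [List.range_succ_eq_map]
  simp

lemma take_histUpTo (π : ℕ → Q) {j k : ℕ} (hj : j ≤ k) :
    (histUpTo π k).take (j + 1) = histUpTo π j := by
  unfold histUpTo
  rw [← List.map_take, List.take_range, show min (j + 1) (k + 1) = j + 1 by omega]

lemma eq_of_map_range {π σ : ℕ → Q} {nn : ℕ}
    (h : (List.range nn).map π = (List.range nn).map σ) {i : ℕ} (hi : i < nn) :
    π i = σ i := by
  have h1 : i < ((List.range nn).map π).length := by simpa using hi
  have := List.getElem_of_eq h h1
  simpa using this

lemma dropLast_concat_getLastD {u : List Q} (hu : u ≠ []) (d : Q) :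
    u.dropLast ++ [u.getLastD d] = u := by
  rw [List.getLastD_eq_getLast?, List.getLast?_eq_getLast hu]
  simp [List.dropLast_append_getLast hu]

end ListAux

section Completion

variable {Q : Type*} (G : GameGraph Q) (f : List Q → Q) (q : Q)

open Classical in
/-- Default next move extending a history. -/
noncomputable def nxt (u : List Q) : Q :=
  if u.getLastD q ∈ G.sys then f u else (G.delta_nonempty (u.getLastD q)).choose

/-- Iterated extension of a history by default moves. -/
noncomputable def Hseq (h : List Q) : ℕ → List Q
  | 0 => h
  | nn + 1 => Hseq h nn ++ [nxt G f q (Hseq h nn)]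

/-- The completion of a finite history to an infinite play. -/
noncomputable def comp (h : List Q) (i : ℕ) : Q := (Hseq G f q h (i + 1)).getD i q

lemma length_Hseq (h : List Q) (nn : ℕ) : (Hseq G f q h nn).length = h.length + nn := by
  induction nn with
  | zero => simp [Hseq]
  | succ k ih => simp [Hseq, ih]; omega

lemma Hseq_prefix (h : List Q) {n₁ n₂ : ℕ} (hn : n₁ ≤ n₂) :
    Hseq G f q h n₁ <+: Hseq G f q h n₂ := by
  induction n₂ with
  | zero => simpa [Nat.le_zero.1 hn] using List.prefix_refl _
  | succ k ih =>
    rcases Nat.lt_or_ge n₁ (k + 1) with hlt | hge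
    · exact (ih (by omega)).trans (by simp [Hseq])
    · have : n₁ = k + 1 := by omega
      subst this
      exact List.prefix_refl _

lemma Hseq_getD (h : List Q) {n₁ n₂ i : ℕ} (hn : n₁ ≤ n₂) (hi : i < h.length + n₁) :
    (Hseq G f q h n₂).getD i q = (Hseq G f q h n₁).getD i q := by
  obtain ⟨t, ht⟩ := Hseq_prefix G f q h hn
  rw [← ht, List.getD_append _ _ _ _ (by rw [length_Hseq]; exact hi)]

lemma comp_eq (h : List Q) {nn i : ℕ} (hi : i < h.length + nn) :
    comp G f q h i = (Hseq G f q h nn).getD i q := by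
  unfold comp
  rcases le_or_gt (i + 1) nn with hle | hlt
  · exact (Hseq_getD G f q h hle (by omega)).symm
  · exact Hseq_getD G f q h (by omega) hi

lemma comp_lt (h : List Q) {i : ℕ} (hi : i < h.length) : comp G f q h i = h.getD i q :=
  comp_eq G f q h (nn := 0) (by omega)

lemma histUpTo_comp (h : List Q) (k : ℕ) :
    histUpTo (comp G f q h) k = (Hseq G f q h (k + 1)).take (k + 1) := by
  apply List.ext_getElem
  · simp [histUpTo, length_Hseq]
  · intro i h1 h2
    have hi : i < k + 1 := by simpa [histUpTo] using h1
    have h3 : i < (Hseq G f q h (k + 1)).length := by rw [length_Hseq]; omega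
    simp only [histUpTo, List.getElem_map, List.getElem_range, List.getElem_take]
    rw [comp_eq G f q h (nn := k + 1) (by omega), List.getD_eq_getElem _ _ h3]

lemma histUpTo_comp' (h : List Q) {k : ℕ} (hk : h.length ≤ k + 1) :
    histUpTo (comp G f q h) k = Hseq G f q h (k + 1 - h.length) := by
  rw [histUpTo_comp]
  obtain ⟨t, ht⟩ := Hseq_prefix G f q h (n₁ := k + 1 - h.length) (n₂ := k + 1) (Nat.sub_le _ _)
  rw [← ht, List.take_left' (by rw [length_Hseq]; omega)]

lemma comp_succ (h : List Q) {k : ℕ} (hk : h.length ≤ k + 1) :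
    comp G f q h (k + 1) = nxt G f q (histUpTo (comp G f q h) k) := by
  rw [histUpTo_comp' G f q h hk]
  have e : comp G f q h (k + 1) = (Hseq G f q h ((k + 1 - h.length) + 1)).getD (k + 1) q :=
    comp_eq G f q h (by omega)
  rw [e]
  show (Hseq G f q h (k + 1 - h.length) ++ [_]).getD (k + 1) q = _
  rw [List.getD_append_right _ _ _ _ (by rw [length_Hseq]; omega)]
  rw [length_Hseq]
  have : k + 1 - (h.length + (k + 1 - h.length)) = 0 := by omega
  rw [this]
  simp

/-- A good finite history: starts at `q`, respects transitions and the strategy. -/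
def GoodHist (h : List Q) : Prop :=
  h.head? = some q ∧ ∀ j, j + 1 < h.length →
    (h.getD (j + 1) q ∈ G.delta (h.getD j q) ∧
      (h.getD j q ∈ G.sys → h.getD (j + 1) q = f (h.take (j + 1))))

lemma nxt_sys (u : List Q) (hu : u.getLastD q ∈ G.sys) : nxt G f q u = f u := by
  unfold nxt
  rw [if_pos hu]

lemma nxt_mem (hf : IsSysStrategy G f) (u : List Q) (hu : u ≠ []) :
    nxt G f q u ∈ G.delta (u.getLastD q) := by
  unfold nxt
  split
  · have := hf u.dropLast (u.getLastD q) (by assumption)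
    rwa [dropLast_concat_getLastD hu] at this
  · exact (G.delta_nonempty _).choose_spec

lemma comp_mem_Lstrat (hf : IsSysStrategy G f) {h : List Q} (hgood : GoodHist G f q h) :
    comp G f q h ∈ Lstrat G q f := by
  obtain ⟨hhead, hcond⟩ := hgood
  have hne : h ≠ [] := by intro e; rw [e] at hhead; simp at hhead
  have hlen : 1 ≤ h.length := List.length_pos_iff.2 hne
  have h0 : comp G f q h 0 = q := by
    rw [comp_lt G f q h (by omega)]
    cases h with
    | nil => simp at hhead
    | cons x t => simp at hhead; simp [hhead]
  have hstep : ∀ j, comp G f q h (j + 1) ∈ G.delta (comp G f q h j) ∧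
      (comp G f q h j ∈ G.sys →
        comp G f q h (j + 1) = f (histUpTo (comp G f q h) j)) := by
    intro j
    rcases Nat.lt_or_ge (j + 1) h.length with hj | hj
    · have e1 : comp G f q h j = h.getD j q := comp_lt G f q h (by omega)
      have e2 : comp G f q h (j + 1) = h.getD (j + 1) q := comp_lt G f q h hj
      have hht : histUpTo (comp G f q h) j = h.take (j + 1) := by
        rw [histUpTo_comp]
        obtain ⟨t, ht⟩ := Hseq_prefix G f q h (n₁ := 0) (n₂ := j + 1) (Nat.zero_le (j + 1))
        have ht0 : Hseq G f q h 0 = h := rfl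
        rw [ht0] at ht
        rw [← ht, List.take_append_of_le_length (by omega)]
      rw [e1, e2, hht]
      exact hcond j hj
    · have e2 : comp G f q h (j + 1) = nxt G f q (histUpTo (comp G f q h) j) :=
        comp_succ G f q h (by omega)
      have elast : (histUpTo (comp G f q h) j).getLastD q = comp G f q h j :=
        getLastD_histUpTo _ _ _
      constructor
      · rw [e2]
        have := nxt_mem G f q hf (histUpTo (comp G f q h) j) (histUpTo_ne_nil _ _)
        rwa [elast] at this
      · intro hsys
        rw [e2, nxt_sys G f q _ (by rw [elast]; exact hsys)]
  exact ⟨⟨h0, fun k => (hstep k).1⟩, fun k hk => (hstep k).2 hk⟩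

lemma exists_play (hf : IsSysStrategy G f) : ∃ π, π ∈ Lstrat G q f := by
  refine ⟨comp G f q [q], comp_mem_Lstrat G f q hf ⟨rfl, ?_⟩⟩
  intro j hj
  simp at hj

lemma deviation (hf : IsSysStrategy G f) {π : ℕ → Q} (hπ : π ∈ Lstrat G q f) (k : ℕ)
    {c : Q} (hc : c ∈ G.delta (π k)) (hsys : π k ∈ G.sys → c = f (histUpTo π k)) :
    ∃ π' ∈ Lstrat G q f, (∀ i ≤ k, π' i = π i) ∧ π' (k + 1) = c := by
  set h : List Q := histUpTo π k ++ [c] with hh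
  have hlen : h.length = k + 2 := by simp [hh, histUpTo]
  have hgd : ∀ i ≤ k, h.getD i q = π i := by
    intro i hi
    rw [hh, List.getD_append _ _ _ _ (by rw [histUpTo_length]; omega)]
    exact histUpTo_getD π q hi
  have hgd' : h.getD (k + 1) q = c := by
    rw [hh, List.getD_append_right _ _ _ _ (by rw [histUpTo_length])]
    rw [histUpTo_length]
    simp
  have htake : ∀ j ≤ k, h.take (j + 1) = histUpTo π j := by
    intro j hj
    rw [hh, List.take_append_of_le_length (by rw [histUpTo_length]; omega)]
    exact take_histUpTo π hj
  have hgood : GoodHist G f q h := by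
    constructor
    · rw [hh, List.head?_append, head?_histUpTo, hπ.1.1]
      simp
    · intro j hj
      rw [hlen] at hj
      rcases Nat.lt_or_ge (j + 1) (k + 1) with hj1 | hj1
      · rw [hgd j (by omega), hgd (j + 1) (by omega), htake j (by omega)]
        exact ⟨hπ.1.2 j, fun hs => hπ.2 j hs⟩
      · have : j = k := by omega
        subst this
        rw [hgd j le_rfl, hgd', htake j le_rfl]
        exact ⟨hc, hsys⟩
  refine ⟨comp G f q h, comp_mem_Lstrat G f q hf hgood, ?_, ?_⟩
  · intro i hi
    rw [comp_lt G f q h (by omega), hgd i hi]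
  · rw [comp_lt G f q h (by omega), hgd']

end Completion

section MainAux

variable {Q : Type*} {n m : ℕ} [NeZero m]
variable (G : GameGraph Q) (FAv : Fin m → Set Q) (FGv : Fin n → Set Q)
variable (q : Q) (f : List Q → Q) (a : Fin n)

/-- The set of states visited by some play compliant with `f`. -/
def Sreach : Set Q := {r | ∃ π ∈ Lstrat G q f, ∃ k, π k = r}

/-- The outer `μY` functional of the `a`-th component at `Zv = const Sreach`. -/
def Ymap (Y : Set Q) : Set Q :=
  ⋃ b, innerXV G FAv FGv (fun _ => Sreach G q f) a b Y

/-- Its least fixed point. -/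
def Yinf : Set Q := lfpSet (Ymap G FAv FGv q f a)

/-- `D = F_Gᵃ ∩ Pre¹(S)`. -/
def Dset : Set Q := FGv a ∩ G.Pre1 (Sreach G q f)

/-- `E = D ∪ Pre¹(Y∞)`. -/
def Eset : Set Q := Dset G FGv q f a ∪ G.Pre1 (Yinf G FAv FGv q f a)

lemma Ymap_mono {Y Y' : Set Q} (h : Y ⊆ Y') :
    Ymap G FAv FGv q f a Y ⊆ Ymap G FAv FGv q f a Y' :=
  Set.iUnion_mono fun b => innerXV_mono_Y G FAv FGv _ a b h

lemma Dset_subset_innerXV (b : Fin m) (Y : Set Q) :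
    Dset G FGv q f a ⊆ innerXV G FAv FGv (fun _ => Sreach G q f) a b Y := by
  apply le_gfpSet
  apply le_lfpSet
  intro T hT
  refine Set.Subset.trans ?_ hT
  intro r hr
  exact Or.inl (Or.inl hr)

lemma Pre1_subset_innerXV (b : Fin m) (Y : Set Q) :
    G.Pre1 Y ⊆ innerXV G FAv FGv (fun _ => Sreach G q f) a b Y := by
  apply le_gfpSet
  apply le_lfpSet
  intro T hT
  refine Set.Subset.trans ?_ hT
  intro r hr
  exact Or.inl (Or.inr hr)

lemma Yinf_prefixed :
    Ymap G FAv FGv q f a (Yinf G FAv FGv q f a) ⊆ Yinf G FAv FGv q f a :=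
  prefixed_lfpSet fun _ _ h => Ymap_mono G FAv FGv q f a h

lemma Dset_subset_Yinf : Dset G FGv q f a ⊆ Yinf G FAv FGv q f a := by
  refine Set.Subset.trans ?_ (Yinf_prefixed G FAv FGv q f a)
  intro r hr
  have hb := Dset_subset_innerXV G FAv FGv q f a
    ⟨0, Nat.pos_of_ne_zero (NeZero.ne m)⟩ (Yinf G FAv FGv q f a) hr
  unfold Ymap
  exact Set.mem_iUnion.2 ⟨_, hb⟩

lemma Pre1_Yinf_subset_Yinf :
    G.Pre1 (Yinf G FAv FGv q f a) ⊆ Yinf G FAv FGv q f a := by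
  refine Set.Subset.trans ?_ (Yinf_prefixed G FAv FGv q f a)
  intro r hr
  have hb := Pre1_subset_innerXV G FAv FGv q f a
    ⟨0, Nat.pos_of_ne_zero (NeZero.ne m)⟩ (Yinf G FAv FGv q f a) hr
  unfold Ymap
  exact Set.mem_iUnion.2 ⟨_, hb⟩

lemma Eset_subset_Yinf : Eset G FAv FGv q f a ⊆ Yinf G FAv FGv q f a :=
  Set.union_subset (Dset_subset_Yinf G FAv FGv q f a)
    (Pre1_Yinf_subset_Yinf G FAv FGv q f a)

lemma Eset_subset_innerWV (b : Fin m) (X₀ : Set Q) :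
    Eset G FAv FGv q f a ⊆
      innerWV G FAv FGv (fun _ => Sreach G q f) a b (Yinf G FAv FGv q f a) X₀ := by
  apply le_lfpSet
  intro T hT
  refine Set.Subset.trans ?_ hT
  rintro r (hr | hr)
  · exact Or.inl (Or.inl hr)
  · exact Or.inl (Or.inr hr)

lemma mem_Sreach {π : ℕ → Q} (hπ : π ∈ Lstrat G q f) (k : ℕ) :
    π k ∈ Sreach G q f := ⟨π, hπ, k, rfl⟩

lemma Sreach_Pre1 (hf : IsSysStrategy G f) :
    Sreach G q f ⊆ G.Pre1 (Sreach G q f) := by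
  rintro r ⟨π, hπ, k, hk⟩
  rcases env_or_sys G r with henv | hsys
  · rw [mem_Pre1_env G henv]
    intro c hc
    obtain ⟨π', hπ', _, hc'⟩ := deviation G f q hf hπ k (hk ▸ hc)
      (fun hs => absurd hs (hk ▸ not_sys_of_env G henv))
    exact hc' ▸ mem_Sreach G q f hπ' (k + 1)
  · rw [mem_Pre1_sys G hsys]
    exact ⟨π (k + 1), hk ▸ hπ.1.2 k, mem_Sreach G q f hπ (k + 1)⟩

lemma fair_extension
    (h3 : prefixes (Lstrat G q f) = prefixes (Lstrat G q f ∩ LGenBuchi G q FAv))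
    {π : ℕ → Q} (hπ : π ∈ Lstrat G q f) (k : ℕ) :
    ∃ σ, σ ∈ Lstrat G q f ∧ (∀ i ≤ k, σ i = π i) ∧ ∀ i, InfOft σ (FAv i) := by
  have hw : (List.range (k + 1)).map π ∈ prefixes (Lstrat G q f) :=
    ⟨π, hπ, k + 1, rfl⟩
  rw [h3] at hw
  obtain ⟨σ, hσ, k', hk'⟩ := hw
  have hlen : k' = k + 1 := by
    have := congrArg List.length hk'
    simpa using this.symm
  subst hlen
  exact ⟨σ, hσ.1, fun i hi => (eq_of_map_range hk' (by omega)).symm, hσ.2.2⟩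

lemma fairD (hf : IsSysStrategy G f)
    (h2 : Lstrat G q f ⊆ (LGenBuchi G q FAv)ᶜ ∪ LGenBuchi G q FGv)
    {σ : ℕ → Q} (hσ : σ ∈ Lstrat G q f) (hfair : ∀ i, InfOft σ (FAv i)) (N : ℕ) :
    ∃ l, N ≤ l ∧ σ l ∈ Dset G FGv q f a := by
  have hA : σ ∈ LGenBuchi G q FAv := ⟨hσ.1, hfair⟩
  rcases h2 hσ with h | h
  · exact absurd hA h
  · obtain ⟨l, hl, hlFG⟩ := h.2 a N
    exact ⟨l, hl, hlFG, Sreach_Pre1 G q f hf (mem_Sreach G q f hσ l)⟩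

/-- The key "stuck" lemma: if from a reachable node no extension can reach `F_Aᵇ`
while avoiding `E`, then the current state already belongs to `Y∞`. -/
lemma stuck_lemma (hf : IsSysStrategy G f)
    (h2 : Lstrat G q f ⊆ (LGenBuchi G q FAv)ᶜ ∪ LGenBuchi G q FGv)
    (h3 : prefixes (Lstrat G q f) = prefixes (Lstrat G q f ∩ LGenBuchi G q FAv))
    {π₀ : ℕ → Q} (hπ₀ : π₀ ∈ Lstrat G q f) (k₀ : ℕ) (b : Fin m)
    (hFa : π₀ k₀ ∉ FAv b) (hE : π₀ k₀ ∉ Eset G FAv FGv q f a)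
    (hNo : ¬ ∃ π k, π ∈ Lstrat G q f ∧ (∀ i ≤ k₀, π i = π₀ i) ∧ k₀ < k ∧
        (∀ j, k₀ < j → j ≤ k → π j ∉ Eset G FAv FGv q f a) ∧ π k ∈ FAv b) :
    π₀ k₀ ∈ Yinf G FAv FGv q f a := by
  classical
  set S : Set Q := Sreach G q f with hS
  set Zv : Fin n → Set Q := fun _ => S with hZv
  set Y : Set Q := Yinf G FAv FGv q f a with hY
  set E : Set Q := Eset G FAv FGv q f a with hEdef
  -- the witness predicate
  set Wit : (ℕ → Q) → ℕ → Q → Prop := fun π k r =>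
    π ∈ Lstrat G q f ∧ (∀ i ≤ k₀, π i = π₀ i) ∧ k₀ ≤ k ∧
      (∀ j, k₀ < j → j ≤ k → π j ∉ E) ∧ π k = r with hWit
  set X₀ : Set Q := {r | ∃ π k, Wit π k r} with hX₀
  set L : Set Q := innerWV G FAv FGv Zv a b Y X₀ with hL
  have hLfix : bodyV G FAv FGv Zv a b Y X₀ L = L :=
    innerWV_fixed G FAv FGv Zv a b Y X₀
  have hEL : E ⊆ L := Eset_subset_innerWV G FAv FGv q f a b X₀
  -- basic properties of `X₀`
  have hX₀Fa : ∀ r ∈ X₀, r ∉ FAv b := by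
    rintro r ⟨π, k, hπ, hag, hk, havoid, hπk⟩
    rcases Nat.lt_or_ge k₀ k with hlt | hge
    · intro hr
      exact hNo ⟨π, k, hπ, hag, hlt, havoid, hπk ▸ hr⟩
    · have hkk : k = k₀ := by omega
      rw [← hπk, hkk, hag k₀ le_rfl]
      exact hFa
  have hX₀E : ∀ r ∈ X₀, r ∉ E := by
    rintro r ⟨π, k, hπ, hag, hk, havoid, hπk⟩
    rcases Nat.lt_or_ge k₀ k with hlt | hge
    · exact hπk ▸ havoid k hlt le_rfl
    · have hkk : k = k₀ := by omega
      rw [← hπk, hkk, hag k₀ le_rfl]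
      exact hE
  -- one-step body membership
  have hbody : ∀ r ∈ X₀, ∀ π k, Wit π k r → π (k + 1) ∈ L → r ∈ L := by
    intro r hr π k hw hcL
    obtain ⟨hπ, hag, hk, havoid, hπk⟩ := hw
    have hcdelta : π (k + 1) ∈ G.delta r := hπk ▸ hπ.1.2 k
    have hPreE : r ∈ G.PreE L := ⟨π (k + 1), hcdelta, hcL⟩
    have hPre1 : r ∈ G.Pre1 (L ∪ (X₀ \ FAv b)) := by
      rcases env_or_sys G r with henv | hsys
      · rw [mem_Pre1_env G henv]
        intro c' hc'
        obtain ⟨π', hπ', hag', hc'eq⟩ := deviation G f q hf hπ k (hπk ▸ hc')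
          (fun hs => absurd hs (hπk ▸ not_sys_of_env G henv))
        by_cases hcE : c' ∈ E
        · exact Or.inl (hEL hcE)
        · have hc'X : c' ∈ X₀ := by
            refine ⟨π', k + 1, hπ', ?_, by omega, ?_, hc'eq⟩
            · intro i hi
              rw [hag' i (by omega)]
              exact hag i hi
            · intro j hj1 hj2
              rcases Nat.lt_or_ge j (k + 1) with hjk | hjk
              · rw [hag' j (by omega)]
                exact havoid j hj1 (by omega)
              · have : j = k + 1 := by omega
                subst this
                rw [hc'eq]
                exact hcE
          exact Or.inr ⟨hc'X, hX₀Fa c' hc'X⟩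
      · rw [mem_Pre1_sys G hsys]
        exact ⟨π (k + 1), hcdelta, Or.inl hcL⟩
    have : r ∈ bodyV G FAv FGv Zv a b Y X₀ L :=
      Or.inr ⟨hX₀Fa r hr, hPreE, hPre1⟩
    rwa [hLfix] at this
  -- main induction: distance to `E` along some witness
  have key : ∀ p r, r ∈ X₀ → (∃ π k, Wit π k r ∧ π (k + p + 1) ∈ E) → r ∈ L := by
    intro p
    induction p with
    | zero =>
      rintro r hr ⟨π, k, hw, hp⟩
      exact hbody r hr π k hw (hEL hp)
    | succ p ih =>
      rintro r hr ⟨π, k, hw, hp⟩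
      obtain ⟨hπ, hag, hk, havoid, hπk⟩ := hw
      by_cases hcE : π (k + 1) ∈ E
      · exact hbody r hr π k ⟨hπ, hag, hk, havoid, hπk⟩ (hEL hcE)
      · have hcX : π (k + 1) ∈ X₀ := by
          refine ⟨π, k + 1, hπ, hag, by omega, ?_, rfl⟩
          intro j hj1 hj2
          rcases Nat.lt_or_ge j (k + 1) with hjk | hjk
          · exact havoid j hj1 (by omega)
          · have : j = k + 1 := by omega
            subst this
            exact hcE
        have hcL : π (k + 1) ∈ L := by
          refine ih (π (k + 1)) hcX ⟨π, k + 1, ⟨hπ, hag, by omega, ?_, rfl⟩, ?_⟩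
          · intro j hj1 hj2
            rcases Nat.lt_or_ge j (k + 1) with hjk | hjk
            · exact havoid j hj1 (by omega)
            · have hje : j = k + 1 := by omega
              rw [hje]
              exact hcE
          · show π (k + 1 + p + 1) ∈ E
            have heq : k + 1 + p + 1 = k + (p + 1) + 1 := by omega
            rw [heq]
            exact hp
        exact hbody r hr π k ⟨hπ, hag, hk, havoid, hπk⟩ hcL
  -- every element of `X₀` has finite distance to `E`
  have hAex : ∀ r ∈ X₀, ∃ p π k, Wit π k r ∧ π (k + p + 1) ∈ E := by
    rintro r ⟨π, k, hπ, hag, hk, havoid, hπk⟩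
    obtain ⟨σ, hσ, hagσ, hfair⟩ := fair_extension G FAv q f h3 hπ k
    obtain ⟨l, hl, hlD⟩ := fairD G FAv FGv q f a hf h2 hσ hfair (k + 1)
    refine ⟨l - k - 1, σ, k, ⟨hσ, ?_, hk, ?_, by rw [hagσ k le_rfl]; exact hπk⟩, ?_⟩
    · intro i hi
      rw [hagσ i (by omega)]
      exact hag i hi
    · intro j hj1 hj2
      rw [hagσ j (by omega)]
      exact havoid j hj1 hj2
    · have : k + (l - k - 1) + 1 = l := by omega
      rw [this]
      exact Or.inl hlD
  have hX₀L : X₀ ⊆ L := by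
    intro r hr
    obtain ⟨p, π, k, hw, hp⟩ := hAex r hr
    exact key p r hr ⟨π, k, hw, hp⟩
  -- conclude
  have hX₀XV : X₀ ⊆ innerXV G FAv FGv Zv a b Y := le_gfpSet hX₀L
  have hr₀ : π₀ k₀ ∈ X₀ := ⟨π₀, k₀, hπ₀, fun i _ => rfl, le_rfl,
    fun j hj1 hj2 => absurd (lt_of_lt_of_le hj1 hj2) (lt_irrefl _), rfl⟩
  have : π₀ k₀ ∈ Ymap G FAv FGv q f a Y := by
    unfold Ymap
    exact Set.mem_iUnion.2 ⟨b, hX₀XV hr₀⟩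
  exact Yinf_prefixed G FAv FGv q f a this

/-- From a state outside `Pre¹(Y∞)` the play can proceed one step staying outside
`Y∞`. -/
lemma one_step (hf : IsSysStrategy G f) {π : ℕ → Q} (hπ : π ∈ Lstrat G q f) (k : ℕ)
    (hP : π k ∉ G.Pre1 (Yinf G FAv FGv q f a)) :
    ∃ π', π' ∈ Lstrat G q f ∧ (∀ i ≤ k, π' i = π i) ∧
      π' (k + 1) ∉ Yinf G FAv FGv q f a := by
  rcases env_or_sys G (π k) with henv | hsys
  · rw [mem_Pre1_env G henv] at hP
    obtain ⟨c, hc, hcY⟩ := Set.not_subset.1 hP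
    obtain ⟨π', hπ', hag, hceq⟩ := deviation G f q hf hπ k hc
      (fun hs => absurd hs (not_sys_of_env G henv))
    exact ⟨π', hπ', hag, hceq ▸ hcY⟩
  · refine ⟨π, hπ, fun i _ => rfl, fun hY => ?_⟩
    rw [mem_Pre1_sys G hsys] at hP
    exact hP ⟨π (k + 1), hπ.1.2 k, hY⟩

/-- The macro step of the spoiling-play construction. -/
lemma macro_step (hf : IsSysStrategy G f)
    (h2 : Lstrat G q f ⊆ (LGenBuchi G q FAv)ᶜ ∪ LGenBuchi G q FGv)
    (h3 : prefixes (Lstrat G q f) = prefixes (Lstrat G q f ∩ LGenBuchi G q FAv))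
    {π : ℕ → Q} (hπ : π ∈ Lstrat G q f) (k : ℕ) (b : Fin m)
    (hkY : π k ∉ Yinf G FAv FGv q f a) :
    ∃ π' k', π' ∈ Lstrat G q f ∧ k < k' ∧ (∀ i ≤ k, π' i = π i) ∧
      π' k' ∉ Yinf G FAv FGv q f a ∧
      (∀ j, k < j → j ≤ k' → π' j ∉ Dset G FGv q f a) ∧
      ∃ p, k ≤ p ∧ p ≤ k' ∧ π' p ∈ FAv b := by
  have hDY : Dset G FGv q f a ⊆ Yinf G FAv FGv q f a := Dset_subset_Yinf G FAv FGv q f a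
  have hPY : G.Pre1 (Yinf G FAv FGv q f a) ⊆ Yinf G FAv FGv q f a :=
    Pre1_Yinf_subset_Yinf G FAv FGv q f a
  by_cases hb : π k ∈ FAv b
  · obtain ⟨π', hπ', hag, hY'⟩ := one_step G FAv FGv q f a hf hπ k (fun h => hkY (hPY h))
    refine ⟨π', k + 1, hπ', by omega, hag, hY', ?_, k, le_rfl, by omega, ?_⟩
    · intro j hj1 hj2
      have : j = k + 1 := by omega
      rw [this]
      exact fun hD => hY' (hDY hD)
    · rw [hag k le_rfl]
      exact hb
  · -- not stuck: a reach-extension exists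
    have hreach : ∃ σ k', σ ∈ Lstrat G q f ∧ (∀ i ≤ k, σ i = π i) ∧ k < k' ∧
        (∀ j, k < j → j ≤ k' → σ j ∉ Eset G FAv FGv q f a) ∧ σ k' ∈ FAv b := by
      by_contra hNo
      exact hkY (stuck_lemma G FAv FGv q f a hf h2 h3 hπ k b hb
        (fun hEm => hkY (Eset_subset_Yinf G FAv FGv q f a hEm)) hNo)
    obtain ⟨σ, k', hσ, hagσ, hkk', havoid, hFab⟩ := hreach
    have hk'E : σ k' ∉ Eset G FAv FGv q f a := havoid k' hkk' le_rfl
    have hk'P : σ k' ∉ G.Pre1 (Yinf G FAv FGv q f a) :=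
      fun h => hk'E (Or.inr h)
    by_cases hk'Y : σ k' ∈ Yinf G FAv FGv q f a
    · obtain ⟨σ', hσ', hag', hY'⟩ := one_step G FAv FGv q f a hf hσ k' hk'P
      refine ⟨σ', k' + 1, hσ', by omega, ?_, hY', ?_, k', by omega, by omega, ?_⟩
      · intro i hi
        rw [hag' i (by omega)]
        exact hagσ i hi
      · intro j hj1 hj2
        rcases Nat.lt_or_ge j (k' + 1) with hjk | hjk
        · rw [hag' j (by omega)]
          exact fun hD => havoid j hj1 (by omega) (Or.inl hD)
        · have : j = k' + 1 := by omega
          rw [this]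
          exact fun hD => hY' (hDY hD)
      · rw [hag' k' le_rfl]
        exact hFab
    · refine ⟨σ, k', hσ, hkk', hagσ, hk'Y, ?_, k', by omega, le_rfl, hFab⟩
      intro j hj1 hj2
      exact fun hD => havoid j hj1 hj2 (Or.inl hD)

/-- Main lemma: every reachable state lies in `Y∞`. -/
lemma Sreach_subset_Yinf (hf : IsSysStrategy G f)
    (h2 : Lstrat G q f ⊆ (LGenBuchi G q FAv)ᶜ ∪ LGenBuchi G q FGv)
    (h3 : prefixes (Lstrat G q f) = prefixes (Lstrat G q f ∩ LGenBuchi G q FAv)) :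
    Sreach G q f ⊆ Yinf G FAv FGv q f a := by
  classical
  intro r hr
  by_contra hrY
  obtain ⟨π₀, hπ₀, k₀, hk₀⟩ := hr
  set bseq : ℕ → Fin m := fun t => ⟨t % m, Nat.mod_lt _ (Nat.pos_of_ne_zero (NeZero.ne m))⟩
    with hbseq
  -- the choice function for macro steps
  have hstep : ∀ s : (ℕ → Q) × ℕ, s.1 ∈ Lstrat G q f → s.1 s.2 ∉ Yinf G FAv FGv q f a →
      ∀ b : Fin m, ∃ s' : (ℕ → Q) × ℕ,
        (s'.1 ∈ Lstrat G q f ∧ s'.1 s'.2 ∉ Yinf G FAv FGv q f a) ∧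
        (s.2 < s'.2 ∧ (∀ i ≤ s.2, s'.1 i = s.1 i) ∧
          (∀ j, s.2 < j → j ≤ s'.2 → s'.1 j ∉ Dset G FGv q f a) ∧
          ∃ p, s.2 ≤ p ∧ p ≤ s'.2 ∧ s'.1 p ∈ FAv b) := by
    intro s h1 h2' b
    obtain ⟨π', k', hπ', hlt, hag, hY, hD, hvis⟩ :=
      macro_step G FAv FGv q f a hf h2 h3 h1 s.2 b h2'
    exact ⟨(π', k'), ⟨hπ', hY⟩, hlt, hag, hD, hvis⟩
  choose F hF using hstep
  have hbase : π₀ k₀ ∉ Yinf G FAv FGv q f a := by rw [hk₀]; exact hrY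
  -- the sequence of macro nodes
  let seq : ℕ → {s : (ℕ → Q) × ℕ // s.1 ∈ Lstrat G q f ∧ s.1 s.2 ∉ Yinf G FAv FGv q f a} :=
    fun t => Nat.rec ⟨(π₀, k₀), hπ₀, hbase⟩
      (fun t ih => ⟨F ih.1 ih.2.1 ih.2.2 (bseq t), (hF ih.1 ih.2.1 ih.2.2 (bseq t)).1⟩) t
  have hseq0 : (seq 0).1 = (π₀, k₀) := rfl
  have hseqS : ∀ t, (seq (t + 1)).1 =
      F (seq t).1 (seq t).2.1 (seq t).2.2 (bseq t) := fun t => rfl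
  set πt : ℕ → ℕ → Q := fun t => (seq t).1.1 with hπt
  set kt : ℕ → ℕ := fun t => (seq t).1.2 with hkt
  have hprop : ∀ t, kt t < kt (t + 1) ∧ (∀ i ≤ kt t, πt (t + 1) i = πt t i) ∧
      (∀ j, kt t < j → j ≤ kt (t + 1) → πt (t + 1) j ∉ Dset G FGv q f a) ∧
      ∃ p, kt t ≤ p ∧ p ≤ kt (t + 1) ∧ πt (t + 1) p ∈ FAv (bseq t) := by
    intro t
    exact (hF (seq t).1 (seq t).2.1 (seq t).2.2 (bseq t)).2
  have hmem : ∀ t, πt t ∈ Lstrat G q f := fun t => (seq t).2.1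
  have hkmono : ∀ t d, kt t + d ≤ kt (t + d) := by
    intro t d
    induction d with
    | zero => simp
    | succ d ih =>
      have := (hprop (t + d)).1
      have ht : t + (d + 1) = (t + d) + 1 := by omega
      rw [ht]
      omega
  have hagree : ∀ t d, ∀ i ≤ kt t, πt (t + d) i = πt t i := by
    intro t d
    induction d with
    | zero => intro i _; rfl
    | succ d ih =>
      intro i hi
      have ht : t + (d + 1) = (t + d) + 1 := by omega
      rw [ht, (hprop (t + d)).2.1 i (le_trans hi (by have := hkmono t d; omega))]
      exact ih i hi
  set πf : ℕ → Q := fun j => πt (j + 1) j with hπf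
  have hkbig : ∀ t, k₀ + t ≤ kt t := by
    intro t
    have := hkmono 0 t
    simpa [show kt 0 = k₀ from rfl] using this
  have hkey : ∀ t₁ t₂ i, t₁ ≤ t₂ → i ≤ kt t₁ → πt t₂ i = πt t₁ i := by
    intro t₁ t₂ i h hi
    have hh : πt t₂ i = πt (t₁ + (t₂ - t₁)) i := by
      congr 1
      omega
    rw [hh, hagree t₁ (t₂ - t₁) i hi]
  have hπfval : ∀ t, ∀ i ≤ kt t, πf i = πt t i := by
    intro t i hi
    show πt (i + 1) i = πt t i
    rcases Nat.le_total (i + 1) t with h | h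
    · exact (hkey (i + 1) t i h (by have := hkbig (i + 1); omega)).symm
    · exact hkey t (i + 1) i h hi
  have hπfL : πf ∈ Lstrat G q f := by
    refine ⟨⟨?_, ?_⟩, ?_⟩
    · rw [hπfval 0 0 (by have := hkbig 0; omega)]
      exact (hmem 0).1.1
    · intro k
      have h1 : πf k = πt (k + 2) k := hπfval (k + 2) k (by have := hkbig (k + 2); omega)
      have h2' : πf (k + 1) = πt (k + 2) (k + 1) :=
        hπfval (k + 2) (k + 1) (by have := hkbig (k + 2); omega)
      rw [h1, h2']
      exact (hmem (k + 2)).1.2 k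
    · intro k hk
      have h1 : πf k = πt (k + 2) k := hπfval (k + 2) k (by have := hkbig (k + 2); omega)
      have h2' : πf (k + 1) = πt (k + 2) (k + 1) :=
        hπfval (k + 2) (k + 1) (by have := hkbig (k + 2); omega)
      have hhist : histUpTo πf k = histUpTo (πt (k + 2)) k :=
        histUpTo_congr fun i hi => hπfval (k + 2) i (by have := hkbig (k + 2); omega)
      rw [h2', hhist]
      exact (hmem (k + 2)).2 k (h1 ▸ hk)
  -- the limit play avoids `D` after `k₀`
  have hinv : ∀ t j, k₀ < j → j ≤ kt t → πt t j ∉ Dset G FGv q f a := by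
    intro t
    induction t with
    | zero =>
      intro j hj1 hj2
      have : kt 0 = k₀ := rfl
      omega
    | succ t ih =>
      intro j hj1 hj2
      rcases Nat.lt_or_ge (kt t) j with h | h
      · exact (hprop t).2.2.1 j h hj2
      · rw [(hprop t).2.1 j h]
        exact ih j hj1 h
  have hπfD : ∀ j, k₀ < j → πf j ∉ Dset G FGv q f a := by
    intro j hj
    rw [hπfval j j (by have := hkbig j; omega)]
    exact hinv j j hj (by have := hkbig j; omega)
  -- the limit play is fair
  have hπfFair : ∀ b, InfOft πf (FAv b) := by
    intro b N
    set t : ℕ := b.1 + N * m with hfj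
    have hbt : bseq t = b := by
      apply Fin.ext
      show (b.1 + N * m) % m = b.1
      rw [Nat.add_mul_mod_self_right]
      exact Nat.mod_eq_of_lt b.2
    obtain ⟨p, hp1, hp2, hp3⟩ := (hprop t).2.2.2
    refine ⟨p, ?_, ?_⟩
    · have h1 := hkbig t
      have h2' : N ≤ t := by
        have : N ≤ N * m := Nat.le_mul_of_pos_right N (Nat.pos_of_ne_zero (NeZero.ne m))
        omega
      omega
    · rw [hπfval (t + 1) p hp2]
      rw [hbt] at hp3
      exact hp3
  -- contradiction via `h2`
  have hGB : πf ∈ LGenBuchi G q FAv := ⟨hπfL.1, hπfFair⟩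
  rcases h2 hπfL with h | h
  · exact h hGB
  · obtain ⟨l, hl, hlFG⟩ := h.2 a (k₀ + 1)
    have : πf l ∈ Dset G FGv q f a :=
      ⟨hlFG, Sreach_Pre1 G q f hf (mem_Sreach G q f hπfL l)⟩
    exact hπfD l (by omega) this

end MainAux

/-- Theorem 3, completeness part: for every state `q ∉ ⟦φ₄ᵛ⟧` and
every system strategy `f¹`, either (i) `∅ ≠ L_q(H,f¹) ⊆ L̄_q(H,𝓕_A) ∪ L_q(H,𝓕_G)`
fails, or (ii) `Pre(L_q(H,f¹)) = Pre(L_q(H,f¹) ∩ L_q(H,𝓕_A))` fails. -/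
theorem completeness_vectorized {Q : Type*} [Fintype Q] {n m : ℕ} [NeZero n] [NeZero m]
    (G : GameGraph Q) (FAv : Fin m → Set Q) (FGv : Fin n → Set Q)
    (q : Q) (hq : q ∉ phi4vSem G FAv FGv)
    (f : List Q → Q) (hf : IsSysStrategy G f) :
    ¬(((Lstrat G q f).Nonempty ∧
          Lstrat G q f ⊆ (LGenBuchi G q FAv)ᶜ ∪ LGenBuchi G q FGv) ∧
        prefixes (Lstrat G q f) = prefixes (Lstrat G q f ∩ LGenBuchi G q FAv)) := by
  rintro ⟨⟨hne, h2⟩, h3⟩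
  apply hq
  obtain ⟨π, hπ⟩ := exists_play G f q hf
  have hqS : q ∈ Sreach G q f := ⟨π, hπ, 0, hπ.1.1⟩
  have hsub : ∀ a : Fin n, Sreach G q f ⊆ Yinf G FAv FGv q f a :=
    fun a => Sreach_subset_Yinf G FAv FGv q f a hf h2 h3
  unfold phi4vSem
  refine Set.mem_iUnion.2 ⟨⟨0, Nat.pos_of_ne_zero (NeZero.ne n)⟩, ?_⟩
  unfold phi4v gfpVec
  refine Set.mem_iUnion.2 ⟨fun _ => Sreach G q f, Set.mem_iUnion.2 ⟨?_, hqS⟩⟩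
  intro a'
  exact hsub a'

end GR1
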